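/- The elliptic curve over Q with Weierstrass equation y² + xy + y = x³ + x² has Mordell–Weil group over Q cyclic of order 4, generated by the point (0,0). -/

import Mathlib

/-- The Weierstrass curve `y² + xy + y = x³ + x²` over `ℚ`. -/
def W9 : WeierstrassCurve.Affine ℚ := { a₁ := 1, a₂ := 1, a₃ := 1, a₄ := 0, a₆ := 0 }

lemma W9_ns : W9.Nonsingular 0 0 := by
  simp only [WeierstrassCurve.Affine.nonsingular_iff, WeierstrassCurve.Affine.equation_iff, W9]
  norm_num


lemma sq_split (a b c : ℤ) (ha : 0 < a) (hb : 0 < b) (h : a * b = c ^ 2) :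
    ∃ u v : ℤ, a = (Int.gcd a b : ℤ) * u ^ 2 ∧ b = (Int.gcd a b : ℤ) * v ^ 2 := by
  have hgn : 0 < Int.gcd a b := by
    rw [Int.gcd_pos_iff]; left; omega
  have hgpos : (0:ℤ) < (Int.gcd a b : ℤ) := by exact_mod_cast hgn
  obtain ⟨a₁, ha₁⟩ : (Int.gcd a b : ℤ) ∣ a := Int.gcd_dvd_left _ _
  obtain ⟨b₁, hb₁⟩ : (Int.gcd a b : ℤ) ∣ b := Int.gcd_dvd_right _ _
  have hco : IsCoprime a₁ b₁ := by
    rw [Int.isCoprime_iff_gcd_eq_one]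
    have h3 := Int.gcd_div_gcd_div_gcd (i := a) (j := b) hgn
    have e1 : a / (Int.gcd a b : ℤ) = a₁ := Int.ediv_eq_of_eq_mul_left (ne_of_gt hgpos) (by linarith [ha₁] : a = a₁ * (Int.gcd a b : ℤ))
    have e2 : b / (Int.gcd a b : ℤ) = b₁ := Int.ediv_eq_of_eq_mul_left (ne_of_gt hgpos) (by linarith [hb₁] : b = b₁ * (Int.gcd a b : ℤ))
    rwa [e1, e2] at h3
  have hgc : (Int.gcd a b : ℤ) ∣ c := by
    rw [← Int.pow_dvd_pow_iff (two_ne_zero)]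
    exact ⟨a₁ * b₁, by linear_combination (-1 : ℤ) * h + b * ha₁ + (Int.gcd a b : ℤ) * a₁ * hb₁⟩
  obtain ⟨c₁, hc₁⟩ := hgc
  have hab : a₁ * b₁ = c₁ ^ 2 := by
    have h2 : (Int.gcd a b : ℤ) ^ 2 * (a₁ * b₁) = (Int.gcd a b : ℤ) ^ 2 * c₁ ^ 2 := by
      linear_combination (-b) * ha₁ - (Int.gcd a b : ℤ) * a₁ * hb₁ + h
        + (c + (Int.gcd a b : ℤ) * c₁) * hc₁
    exact mul_left_cancel₀ (by positivity) h2
  have ha₁pos : 0 < a₁ := by nlinarith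
  have hb₁pos : 0 < b₁ := by nlinarith
  obtain ⟨u, hu⟩ := Int.sq_of_isCoprime hco hab
  obtain ⟨v, hv⟩ := Int.sq_of_isCoprime hco.symm (by rw [mul_comm]; exact hab)
  refine ⟨u, v, ?_, ?_⟩
  · rcases hu with hu | hu
    · linear_combination ha₁ + (Int.gcd a b : ℤ) * hu
    · exfalso; nlinarith [sq_nonneg u]
  · rcases hv with hv | hv
    · linear_combination hb₁ + (Int.gcd a b : ℤ) * hv
    · exfalso; nlinarith [sq_nonneg v]

lemma pow4_of_coprime (a b c : ℤ) (h : IsCoprime a b) (ha : 0 < a) (heq : a * b = c ^ 4) :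
    ∃ d : ℤ, a = d ^ 4 := by
  have h' : IsUnit (gcd a b) := by
    rw [← Int.coe_gcd, Int.isCoprime_iff_gcd_eq_one.mp h, Int.ofNat_one]
    exact isUnit_one
  obtain ⟨d, ⟨u, hu⟩⟩ := exists_associated_pow_of_mul_eq_pow h' heq
  rcases Int.units_eq_one_or u with hu' | hu' <;> rw [hu'] at hu
  · exact ⟨d, by simpa using hu.symm⟩
  · exfalso
    simp at hu
    have h4 : (0:ℤ) ≤ d ^ 4 := by positivity
    nlinarith [hu, ha, h4]

lemma dvd15_cases (d : ℤ) (hpos : 0 < d) (hdvd : d ∣ 15) : d = 1 ∨ d = 3 ∨ d = 5 ∨ d = 15 := by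
  have h15 : d ≤ 15 := Int.le_of_dvd (by norm_num) hdvd
  interval_cases d <;> revert hdvd <;> decide

lemma split15 (a b ν : ℤ) (ha : 0 < a) (hb : 0 < b) (hco : IsCoprime a b)
    (h : a * b = 15 * ν ^ 4) :
    ∃ d₁ d₂ s t : ℤ,
      (d₁ = 1 ∧ d₂ = 15 ∨ d₁ = 3 ∧ d₂ = 5 ∨ d₁ = 5 ∧ d₂ = 3 ∨ d₁ = 15 ∧ d₂ = 1) ∧
      a = d₁ * s ^ 4 ∧ b = d₂ * t ^ 4 ∧ s ^ 2 * t ^ 2 = ν ^ 2 := by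
  set d₁ : ℤ := (Int.gcd a 15 : ℤ) with hd₁def
  set d₂ : ℤ := (Int.gcd b 15 : ℤ) with hd₂def
  have hd₁pos : 0 < d₁ := by
    have h' : 0 < Int.gcd a 15 := by rw [Int.gcd_pos_iff]; right; norm_num
    exact hd₁def ▸ Int.natCast_pos.mpr h'
  have hd₂pos : 0 < d₂ := by
    have h' : 0 < Int.gcd b 15 := by rw [Int.gcd_pos_iff]; right; norm_num
    exact hd₂def ▸ Int.natCast_pos.mpr h'
  have hd₁a : d₁ ∣ a := Int.gcd_dvd_left _ _
  have hd₂b : d₂ ∣ b := Int.gcd_dvd_left _ _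
  have hd₁15 : d₁ ∣ 15 := Int.gcd_dvd_right _ _
  have hd₂15 : d₂ ∣ 15 := Int.gcd_dvd_right _ _
  have hcod : IsCoprime d₁ d₂ :=
    IsCoprime.of_isCoprime_of_dvd_left (IsCoprime.of_isCoprime_of_dvd_right hco hd₂b) hd₁a
  have h3 : (3:ℤ) ∣ d₁ * d₂ := by
    have h3ab : (3:ℤ) ∣ a * b := by rw [h]; exact ⟨5 * ν ^ 4, by ring⟩
    rcases (Int.Prime.dvd_mul (p := 3) (by norm_num) (by exact_mod_cast h3ab)) with h' | h'
    · have h'' : (3:ℤ) ∣ a := by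
        exact Int.dvd_natAbs.mp (by exact_mod_cast h')
      exact Dvd.dvd.mul_right (Int.dvd_coe_gcd h'' (by norm_num)) d₂
    · have h'' : (3:ℤ) ∣ b := by
        exact Int.dvd_natAbs.mp (by exact_mod_cast h')
      exact Dvd.dvd.mul_left (Int.dvd_coe_gcd h'' (by norm_num)) d₁
  have h5 : (5:ℤ) ∣ d₁ * d₂ := by
    have h5ab : (5:ℤ) ∣ a * b := by rw [h]; exact ⟨3 * ν ^ 4, by ring⟩
    rcases (Int.Prime.dvd_mul (p := 5) (by norm_num) (by exact_mod_cast h5ab)) with h' | h'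
    · have h'' : (5:ℤ) ∣ a := by
        exact Int.dvd_natAbs.mp (by exact_mod_cast h')
      exact Dvd.dvd.mul_right (Int.dvd_coe_gcd h'' (by norm_num)) d₂
    · have h'' : (5:ℤ) ∣ b := by
        exact Int.dvd_natAbs.mp (by exact_mod_cast h')
      exact Dvd.dvd.mul_left (Int.dvd_coe_gcd h'' (by norm_num)) d₁
  have h15dvd : (15:ℤ) ∣ d₁ * d₂ := by
    have hc35 : IsCoprime (3:ℤ) 5 := by
      rw [Int.isCoprime_iff_gcd_eq_one]; decide
    exact (show (15:ℤ) = 3 * 5 by norm_num) ▸ hc35.mul_dvd h3 h5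
  have hdvd15 : d₁ * d₂ ∣ 15 := hcod.mul_dvd hd₁15 hd₂15
  have hprod : d₁ * d₂ = 15 := Int.dvd_antisymm (by positivity) (by norm_num) hdvd15 h15dvd
  obtain ⟨α, hα⟩ := hd₁a
  obtain ⟨β, hβ⟩ := hd₂b
  have hαpos : 0 < α := by nlinarith
  have hβpos : 0 < β := by nlinarith
  have hαβ : α * β = ν ^ 4 := by
    have h2 : (15:ℤ) * (α * β) = 15 * ν ^ 4 := by
      calc (15:ℤ) * (α * β) = (d₁ * α) * (d₂ * β) := by rw [← hprod]; ring
      _ = a * b := by rw [← hα, ← hβ]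
      _ = 15 * ν ^ 4 := h
    exact mul_left_cancel₀ (by norm_num) h2
  have hcoαβ : IsCoprime α β :=
    IsCoprime.of_isCoprime_of_dvd_left
      (IsCoprime.of_isCoprime_of_dvd_right hco ⟨d₂, by linarith [hβ]⟩) ⟨d₁, by linarith [hα]⟩
  obtain ⟨s, hs⟩ := pow4_of_coprime α β ν hcoαβ hαpos hαβ
  obtain ⟨t, ht⟩ := pow4_of_coprime β α ν hcoαβ.symm hβpos (by rw [mul_comm]; exact hαβ)
  have hst : s ^ 2 * t ^ 2 = ν ^ 2 := by
    have h4 : s ^ 4 * t ^ 4 = ν ^ 4 := by rw [← hs, ← ht]; exact hαβ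
    have h0 : (s ^ 2 * t ^ 2 - ν ^ 2) * (s ^ 2 * t ^ 2 + ν ^ 2) = 0 := by nlinarith [h4]
    rcases mul_eq_zero.mp h0 with h' | h'
    · linarith
    · nlinarith [sq_nonneg s, sq_nonneg t, sq_nonneg ν, sq_nonneg (s*t)]
  have hcases := dvd15_cases d₁ hd₁pos hd₁15
  refine ⟨d₁, d₂, s, t, ?_, by rw [hα, hs], by rw [hβ, ht], hst⟩
  rcases hcases with h' | h' | h' | h' <;> [left; (right;left); (right;right;left); (right;right;right)] <;>
    exact ⟨h', by rw [h'] at hprod; linarith⟩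

lemma den_sq (q s : ℤ) (hq : 0 < q) (hs : 0 < s) (h : q ^ 3 = s ^ 2) :
    ∃ n : ℤ, 0 < n ∧ q = n ^ 2 ∧ s = n ^ 3 := by
  have hgn : 0 < Int.gcd q s := by rw [Int.gcd_pos_iff]; left; omega
  have hgpos : (0:ℤ) < (Int.gcd q s : ℤ) := Int.natCast_pos.mpr hgn
  obtain ⟨q₁, hq₁⟩ : (Int.gcd q s : ℤ) ∣ q := Int.gcd_dvd_left _ _
  obtain ⟨s₁, hs₁⟩ : (Int.gcd q s : ℤ) ∣ s := Int.gcd_dvd_right _ _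
  have hco : IsCoprime q₁ s₁ := by
    rw [Int.isCoprime_iff_gcd_eq_one]
    have h3 := Int.gcd_div_gcd_div_gcd (i := q) (j := s) hgn
    have e1 : q / (Int.gcd q s : ℤ) = q₁ :=
      Int.ediv_eq_of_eq_mul_left (ne_of_gt hgpos) (by linarith [hq₁])
    have e2 : s / (Int.gcd q s : ℤ) = s₁ :=
      Int.ediv_eq_of_eq_mul_left (ne_of_gt hgpos) (by linarith [hs₁])
    rwa [e1, e2] at h3
  have hq₁pos : 0 < q₁ := by nlinarith
  have hs₁pos : 0 < s₁ := by nlinarith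
  have hkey : (Int.gcd q s : ℤ) * q₁ ^ 3 = s₁ ^ 2 := by
    have h2 : (Int.gcd q s : ℤ) ^ 2 * ((Int.gcd q s : ℤ) * q₁ ^ 3) = (Int.gcd q s : ℤ) ^ 2 * s₁ ^ 2 := by
      calc (Int.gcd q s : ℤ) ^ 2 * ((Int.gcd q s : ℤ) * q₁ ^ 3) = ((Int.gcd q s : ℤ) * q₁) ^ 3 := by ring
      _ = q ^ 3 := by rw [← hq₁]
      _ = s ^ 2 := h
      _ = (Int.gcd q s : ℤ) ^ 2 * s₁ ^ 2 := by linear_combination (s + (Int.gcd q s : ℤ) * s₁) * hs₁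
    exact mul_left_cancel₀ (by positivity) h2
  have hq₁dvd : q₁ ∣ s₁ ^ 2 := ⟨(Int.gcd q s : ℤ) * q₁ ^ 2, by linarith [hkey]⟩
  have hunit : IsUnit q₁ := (hco.pow_right (n := 2)).isUnit_of_dvd' dvd_rfl hq₁dvd
  have hq₁1 : q₁ = 1 := by
    rcases Int.isUnit_iff.mp hunit with h' | h' <;> omega
  refine ⟨s₁, hs₁pos, ?_, ?_⟩
  · -- q = s₁ ^ 2
    have : (Int.gcd q s : ℤ) = s₁ ^ 2 := by rw [← hkey, hq₁1]; ring
    rw [hq₁, hq₁1, this]; ring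
  · have : (Int.gcd q s : ℤ) = s₁ ^ 2 := by rw [← hkey, hq₁1]; ring
    rw [hs₁, this]; ring


lemma zmodkill1 : ∀ a b w : ZMod 8,
    w ^ 2 ≠ (2*a+1) ^ 4 - 7 * (2*a+1) ^ 2 * (2*b+1) ^ 2 + 16 * (2*b+1) ^ 4 := by decide

lemma zmodkill2 : ∀ t a ν : ZMod 8,
    (2*t) ^ 2 ≠ (2*a+1) ^ 4 - 28 * (2*a+1) ^ 2 * ν ^ 2 + 256 * ν ^ 4 := by decide

lemma zmodkill35 : ∀ s t a : ZMod 8, 3*s^4 - 5*t^4 ≠ (2*a+1)^2 - 14*s^2*t^2 := by decide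
lemma zmodkill53 : ∀ s t a : ZMod 8, 5*s^4 - 3*t^4 ≠ (2*a+1)^2 - 14*s^2*t^2 := by decide
lemma zmodkill151 : ∀ s t a : ZMod 8, 15*s^4 - t^4 ≠ (2*a+1)^2 - 14*s^2*t^2 := by decide

lemma isCoprime_of_no_prime (x y : ℤ) (h : ∀ p : ℕ, p.Prime → (p:ℤ) ∣ x → (p:ℤ) ∣ y → False) :
    IsCoprime x y := by
  rw [Int.isCoprime_iff_gcd_eq_one]
  by_contra hne
  obtain ⟨p, hp, hpd⟩ := Nat.exists_prime_and_dvd hne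
  exact h p hp (dvd_trans (Int.natCast_dvd_natCast.mpr hpd) (Int.gcd_dvd_left _ _))
    (dvd_trans (Int.natCast_dvd_natCast.mpr hpd) (Int.gcd_dvd_right _ _))

lemma prime_not_unit {p : ℕ} (hp : p.Prime) : ¬ IsUnit (p:ℤ) := by
  rw [Int.isUnit_iff]
  rintro (h | h)
  · exact hp.ne_one (by exact_mod_cast h)
  · have h0 : (0:ℤ) ≤ (p:ℤ) := Int.natCast_nonneg p
    omega

lemma sq_eq_sq_of_sq_eq (x y : ℤ) (hx : 0 ≤ x) (hy : 0 ≤ y) (h : x ^ 2 = y ^ 2) : x = y := by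
  nlinarith [sq_nonneg (x - y), sq_nonneg (x + y)]

lemma descend (u s t : ℤ) (hu : Odd u) (ht0 : t ≠ 0)
    (hPodd : Odd (s ^ 2 + 7 * t ^ 2))
    (hnocp : ∀ p : ℕ, p.Prime → (p:ℤ) ∣ u → (p:ℤ) ∣ t → False)
    (hequ : u ^ 2 = s ^ 4 + 14 * s ^ 2 * t ^ 2 - 15 * t ^ 4) :
    ∃ A B : ℤ, Odd A ∧ B ≠ 0 ∧ IsCoprime A B ∧
      s ^ 2 = A ^ 4 - 7 * A ^ 2 * B ^ 2 + 16 * B ^ 4 ∧ B ^ 2 ≤ t ^ 2 := by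
  have ht2 : (1:ℤ) ≤ t ^ 2 := by rcases lt_or_gt_of_ne ht0 with h | h <;> nlinarith
  have hPpos : 0 < s ^ 2 + 7 * t ^ 2 := by nlinarith [sq_nonneg s]
  have hPusq : (s ^ 2 + 7 * t ^ 2) ^ 2 - u ^ 2 = 64 * t ^ 4 := by linear_combination -hequ
  have hPmpos : 0 < s ^ 2 + 7 * t ^ 2 - u := by nlinarith [sq_nonneg t]
  have hPppos : 0 < s ^ 2 + 7 * t ^ 2 + u := by nlinarith [sq_nonneg t]
  obtain ⟨X, hX⟩ := hPodd.add_odd hu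
  obtain ⟨Y, hY⟩ := hPodd.sub_odd hu
  have hXY : X * Y = (2 * t) ^ 4 := by
    have h4 : 4 * (X * Y) = 4 * ((2*t) ^ 4) := by
      linear_combination hPusq - (Y+Y)*hX - (s^2+7*t^2+u)*hY
    linarith
  have hXpos : 0 < X := by linarith
  have hYpos : 0 < Y := by linarith
  have hsum : X + Y = s ^ 2 + 7 * t ^ 2 := by linarith
  have hdiff : X - Y = u := by linarith
  have hcoXY : IsCoprime X Y := by
    apply isCoprime_of_no_prime
    intro p hp hpX hpY
    have hpP : (p:ℤ) ∣ s ^ 2 + 7 * t ^ 2 := hsum ▸ dvd_add hpX hpY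
    have hpu : (p:ℤ) ∣ u := hdiff ▸ dvd_sub hpX hpY
    have hp2 : p ≠ 2 := by
      rintro rfl
      obtain ⟨k, hk⟩ := hpP
      obtain ⟨m, hm⟩ := hPodd
      omega
    have hpt : (p:ℤ) ∣ t := by
      have h1 : (p:ℤ) ∣ (2 * t) ^ 4 := hXY ▸ dvd_mul_of_dvd_left hpX Y
      have h2 : (p:ℤ) ∣ 2 * t := (Nat.prime_iff_prime_int.mp hp).dvd_of_dvd_pow h1
      rcases (Nat.prime_iff_prime_int.mp hp).dvd_mul.mp h2 with h3 | h3
      · exfalso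
        have h4 : (p:ℤ) ≤ 2 := Int.le_of_dvd (by norm_num) h3
        have h5 : 2 ≤ p := hp.two_le
        have h6 : (2:ℤ) ≤ (p:ℤ) := by exact_mod_cast h5
        have h7 : (p:ℤ) = 2 := le_antisymm h4 h6
        exact hp2 (by exact_mod_cast h7)
      · exact h3
    exact hnocp p hp hpu hpt
  obtain ⟨g, hg⟩ := pow4_of_coprime X Y (2*t) hcoXY hXpos hXY
  obtain ⟨h, hh⟩ := pow4_of_coprime Y X (2*t) hcoXY.symm hYpos (by rw [mul_comm]; exact hXY)
  have hgh : g ^ 2 * h ^ 2 = 4 * t ^ 2 := by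
    apply sq_eq_sq_of_sq_eq _ _ (by positivity) (by positivity)
    have h5 : g ^ 4 * h ^ 4 = (2*t) ^ 4 := by rw [← hg, ← hh]; exact hXY
    nlinarith [h5]
  have hcogh : IsCoprime g h := by
    have h1 : IsCoprime g Y := IsCoprime.of_isCoprime_of_dvd_left
      (hg ▸ hcoXY) (dvd_pow_self g (by norm_num))
    exact IsCoprime.of_isCoprime_of_dvd_right (hh ▸ h1) (dvd_pow_self h (by norm_num))
  have hPgh : s ^ 2 + 7 * t ^ 2 = g ^ 4 + h ^ 4 := by rw [← hsum, hg, hh]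
  have hg0 : g ≠ 0 := by intro h0; rw [h0] at hg; simp at hg; omega
  have hh0 : h ≠ 0 := by intro h0; rw [h0] at hh; simp at hh; omega
  have hparity : Odd g ↔ Even h := by
    have hodd : Odd (g ^ 4 + h ^ 4) := hPgh ▸ hPodd
    rw [Int.odd_add] at hodd
    simpa [Int.odd_pow, Int.even_pow] using hodd
  rcases Int.even_or_odd g with hge | hgo
  · -- g even, h odd
    have hho : Odd h := by
      rw [← Int.not_even_iff_odd]
      intro hhe
      exact (Int.not_odd_iff_even.mpr hge) (hparity.mpr hhe)
    obtain ⟨g₁, hg₁⟩ := hge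
    have ht2' : t ^ 2 = g₁ ^ 2 * h ^ 2 := by
      have h4t : 4 * t ^ 2 = 4 * (g₁ ^ 2 * h ^ 2) := by
        linear_combination -hgh + (g + g₁ + g₁) * h ^ 2 * hg₁
      linarith
    refine ⟨h, g₁, hho, ?_, ?_, ?_, ?_⟩
    · intro h0; rw [h0] at hg₁; simp at hg₁; exact hg0 hg₁
    · exact IsCoprime.of_isCoprime_of_dvd_right hcogh.symm ⟨2, by omega⟩
    · linear_combination hPgh - 7 * ht2' + (g^3 + 2*g₁*g^2 + 4*g₁^2*g + 8*g₁^3) * hg₁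
    · nlinarith [sq_nonneg h, sq_nonneg g₁, ht2', hho]
  · -- g odd, h even
    have hhe : Even h := hparity.mp hgo
    obtain ⟨h₁, hh₁⟩ := hhe
    have ht2' : t ^ 2 = g ^ 2 * h₁ ^ 2 := by
      have h4t : 4 * t ^ 2 = 4 * (g ^ 2 * h₁ ^ 2) := by
        linear_combination -hgh + g ^ 2 * (h + h₁ + h₁) * hh₁
      linarith
    refine ⟨g, h₁, hgo, ?_, ?_, ?_, ?_⟩
    · intro h0; rw [h0] at hh₁; simp at hh₁; exact hh0 hh₁
    · exact IsCoprime.of_isCoprime_of_dvd_right hcogh ⟨2, by omega⟩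
    · linear_combination hPgh - 7 * ht2' + (h^3 + 2*h₁*h^2 + 4*h₁^2*h + 8*h₁^3) * hh₁
    · have hg2 : 1 ≤ g ^ 2 := by rcases lt_or_gt_of_ne hg0 with h' | h' <;> nlinarith
      nlinarith [ht2', hg2, sq_nonneg h₁]

set_option maxHeartbeats 3000000 in
lemma B_odd : ∀ N : ℕ, ∀ n u w : ℤ, n.natAbs = N → n ≠ 0 → Odd u → IsCoprime u n →
    w ^ 2 = u ^ 4 - 7 * u ^ 2 * n ^ 2 + 16 * n ^ 4 → False := by
  intro N
  induction N using Nat.strong_induction_on with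
  | _ N ih =>
  intro n u w hN hn hu hco heq
  obtain ⟨a, ha⟩ := hu
  subst ha
  rcases Int.even_or_odd n with hne | hno
  · -- n even : the descent
    obtain ⟨ν, hν⟩ := hne
    have h2ν : n = 2 * ν := by omega
    clear hν
    subst h2ν
    have hνne : ν ≠ 0 := by omega
    have hν2 : (1:ℤ) ≤ ν ^ 2 := by rcases lt_or_gt_of_ne hνne with h | h <;> nlinarith
    have hRHS : 0 < (2*a+1) ^ 4 - 7 * (2*a+1) ^ 2 * (2*ν) ^ 2 + 16 * (2*ν) ^ 4 := by
      nlinarith [sq_nonneg (2*(2*a+1)^2 - 7*(2*ν)^2), hν2]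
    have hw0 : w ≠ 0 := by intro h0; rw [h0] at heq; simp at heq; nlinarith
    have hWsq : |w| ^ 2 = (2*a+1) ^ 4 - 7 * (2*a+1) ^ 2 * (2*ν) ^ 2 + 16 * (2*ν) ^ 4 := by
      rw [sq_abs]; exact heq
    have hWpos : 0 < |w| := abs_pos.mpr hw0
    have hWodd : Odd |w| := by
      rcases Int.even_or_odd |w| with hWe | hWo
      · exfalso
        obtain ⟨t, ht⟩ := hWe
        apply zmodkill2 (t : ZMod 8) (a : ZMod 8) (ν : ZMod 8)
        rw [ht] at hWsq
        have h8 := congrArg (fun z : ℤ => (z : ZMod 8)) hWsq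
        push_cast at h8
        linear_combination h8
      · exact hWo
    have husq : Odd ((2*a+1) ^ 2) := ⟨2*a^2 + 2*a, by ring⟩
    obtain ⟨c, hc⟩ := hWodd.add_odd husq
    have hWc : |w| = 2*c - (2*a+1) ^ 2 := by linarith
    have hW2 : (2*c - (2*a+1) ^ 2) ^ 2
        = (2*a+1) ^ 4 - 7 * (2*a+1) ^ 2 * (2*ν) ^ 2 + 16 * (2*ν) ^ 4 := by
      rw [← hWc]; exact hWsq
    have hUV : (c - 7*ν^2) * (c - (2*a+1)^2 + 7*ν^2) = 15 * ν ^ 4 := by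
      have h4 : 4 * ((c - 7*ν^2) * (c - (2*a+1)^2 + 7*ν^2)) = 4 * (15 * ν ^ 4) := by
        linear_combination hW2
      linarith
    have hsum : (c - 7*ν^2) + (c - (2*a+1)^2 + 7*ν^2) = |w| := by linarith
    have hdiff : (c - 7*ν^2) - (c - (2*a+1)^2 + 7*ν^2) = (2*a+1) ^ 2 - 14 * ν ^ 2 := by ring
    have hU₁pos : 0 < c - 7*ν^2 := by nlinarith [hUV, hWpos, hν2]
    have hV₁pos : 0 < c - (2*a+1)^2 + 7*ν^2 := by nlinarith [hUV, hWpos, hν2]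
    have hcoUV : IsCoprime (c - 7*ν^2) (c - (2*a+1)^2 + 7*ν^2) := by
      apply isCoprime_of_no_prime
      intro p hp hpU hpV
      have hpW : (p:ℤ) ∣ |w| := hsum ▸ dvd_add hpU hpV
      have hpd : (p:ℤ) ∣ (2*a+1) ^ 2 - 14 * ν ^ 2 := hdiff ▸ dvd_sub hpU hpV
      by_cases hpν : (p:ℤ) ∣ ν
      · have hpu2 : (p:ℤ) ∣ (2*a+1) ^ 2 := by
          have he : (2*a+1) ^ 2 = ((2*a+1) ^ 2 - 14 * ν ^ 2) + (14*ν) * ν := by ring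
          rw [he]; exact dvd_add hpd (Dvd.dvd.mul_left hpν (14*ν))
        have hpu : (p:ℤ) ∣ (2*a+1) := (Nat.prime_iff_prime_int.mp hp).dvd_of_dvd_pow hpu2
        have hpn : (p:ℤ) ∣ 2*ν := Dvd.dvd.mul_left hpν 2
        exact prime_not_unit hp (hco.isUnit_of_dvd' hpu hpn)
      · have hpp : ((p:ℤ) * p) ∣ 15 * ν ^ 4 := hUV ▸ mul_dvd_mul hpU hpV
        have hcopν : IsCoprime ((p:ℤ)) ν :=
          ((Nat.prime_iff_prime_int.mp hp).coprime_iff_not_dvd).mpr hpν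
        have hcop2 : IsCoprime ((p:ℤ)*p) (ν ^ 4) := (hcopν.mul_left hcopν).pow_right
        have hp15 : ((p:ℤ)*p) ∣ 15 := hcop2.dvd_of_dvd_mul_right hpp
        have hple : (p:ℤ)*p ≤ 15 := Int.le_of_dvd (by norm_num) hp15
        have hppnat : p*p ≤ 15 := by exact_mod_cast hple
        have hp2 : 2 ≤ p := hp.two_le
        have hp3 : p ≤ 3 := by nlinarith
        interval_cases p
        · -- p = 2 divides odd |w|
          obtain ⟨k, hk⟩ := hpW
          obtain ⟨m, hm⟩ := hWodd
          omega
        · -- p = 3 : 9 ∣ 15 false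
          norm_num at hp15
    obtain ⟨d₁, d₂, s, t, hdcases, hU₁eq, hV₁eq, hst⟩ :=
      split15 _ _ ν hU₁pos hV₁pos hcoUV hUV
    have hdiff2 : d₁ * s ^ 4 - d₂ * t ^ 4 = (2*a+1) ^ 2 - 14 * (s ^ 2 * t ^ 2) := by
      rw [hst, ← hU₁eq, ← hV₁eq]; ring
    rcases hdcases with ⟨hd₁, hd₂⟩ | ⟨hd₁, hd₂⟩ | ⟨hd₁, hd₂⟩ | ⟨hd₁, hd₂⟩
    · -- (1,15) : main line
      subst hd₁; subst hd₂
      rw [one_mul] at hU₁eq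
      have hs0 : s ≠ 0 := by intro h0; rw [h0] at hU₁eq; simp at hU₁eq; linarith
      have ht0 : t ≠ 0 := by intro h0; rw [h0] at hV₁eq; simp at hV₁eq; linarith
      have hs2 : (1:ℤ) ≤ s ^ 2 := by rcases lt_or_gt_of_ne hs0 with h | h <;> nlinarith
      have hWst : |w| = s ^ 4 + 15 * t ^ 4 := by linear_combination (-1:ℤ)*hsum + hU₁eq + hV₁eq
      -- parity : exactly one of s, t is even
      have hstodd : Odd (s ^ 4 + 15 * t ^ 4) := hWst ▸ hWodd
      have hPodd : Odd (s ^ 2 + 7 * t ^ 2) := by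
        rcases Int.even_or_odd s with hs | hs <;> rcases Int.even_or_odd t with ht | ht
        · exfalso
          obtain ⟨s₁, hs₁⟩ := hs; obtain ⟨t₁, ht₁⟩ := ht
          obtain ⟨m, hm⟩ := hstodd
          rw [hs₁, ht₁] at hm
          have hcontr : 2*(8*s₁^4 + 120*t₁^4) = 2*m+1 := by linear_combination hm
          omega
        · obtain ⟨s₁, hs₁⟩ := hs; obtain ⟨t₁, ht₁⟩ := ht
          exact ⟨2*s₁^2 + 14*t₁^2 + 14*t₁ + 3, by rw [hs₁, ht₁]; ring⟩
        · obtain ⟨s₁, hs₁⟩ := hs; obtain ⟨t₁, ht₁⟩ := ht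
          exact ⟨2*s₁^2 + 2*s₁ + 14*t₁^2, by rw [hs₁, ht₁]; ring⟩
        · exfalso
          obtain ⟨s₁, hs₁⟩ := hs; obtain ⟨t₁, ht₁⟩ := ht
          obtain ⟨m, hm⟩ := hstodd
          rw [hs₁, ht₁] at hm
          have hcontr : 2*(8*s₁^4+16*s₁^3+12*s₁^2+4*s₁+120*t₁^4+240*t₁^3+180*t₁^2+60*t₁+8)
              = 2*m+1 := by linear_combination hm
          omega
      have hequ : (2*a+1) ^ 2 = s ^ 4 + 14 * s ^ 2 * t ^ 2 - 15 * t ^ 4 := by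
        linear_combination (-1:ℤ) * hdiff2
      have hnocp : ∀ p : ℕ, p.Prime → (p:ℤ) ∣ (2*a+1) → (p:ℤ) ∣ t → False := by
        intro p hp hpu hpt
        have hpν : (p:ℤ) ∣ ν := by
          have h1 : (p:ℤ) ∣ ν ^ 2 := by
            rw [← hst]
            exact dvd_mul_of_dvd_right (dvd_pow hpt (by norm_num)) (s^2)
          exact (Nat.prime_iff_prime_int.mp hp).dvd_of_dvd_pow h1
        have hpn : (p:ℤ) ∣ 2*ν := Dvd.dvd.mul_left hpν 2
        exact prime_not_unit hp (hco.isUnit_of_dvd' hpu hpn)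
      obtain ⟨A, B, hAodd, hB0, hcoAB, hseq, hBt⟩ :=
        descend (2*a+1) s t ⟨a, rfl⟩ ht0 hPodd hnocp hequ
      -- apply induction hypothesis
      have hBlt : B.natAbs < N := by
        have h1 : B ^ 2 < (2*ν) ^ 2 := by nlinarith [hBt, hst, hs2, hν2, sq_nonneg t]
        have h2 : (B.natAbs : ℤ) ^ 2 < ((2*ν).natAbs : ℤ) ^ 2 := by
          rw [Int.natAbs_sq, Int.natAbs_sq]; exact h1
        have h3 : B.natAbs < (2*ν).natAbs := by
          by_contra hge
          push_neg at hge
          have := Nat.pow_le_pow_left hge 2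
          have h4 : ((2*ν).natAbs : ℤ) ^ 2 ≤ (B.natAbs : ℤ) ^ 2 := by exact_mod_cast this
          linarith
        rwa [hN] at h3
      exact ih B.natAbs hBlt B A s rfl hB0 hAodd hcoAB hseq
    · -- (3,5)
      subst hd₁; subst hd₂
      apply zmodkill35 (s : ZMod 8) (t : ZMod 8) (a : ZMod 8)
      have h8 := congrArg (fun z : ℤ => (z : ZMod 8)) hdiff2
      push_cast at h8
      linear_combination h8
    · -- (5,3)
      subst hd₁; subst hd₂
      apply zmodkill53 (s : ZMod 8) (t : ZMod 8) (a : ZMod 8)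
      have h8 := congrArg (fun z : ℤ => (z : ZMod 8)) hdiff2
      push_cast at h8
      linear_combination h8
    · -- (15,1)
      subst hd₁; subst hd₂
      apply zmodkill151 (s : ZMod 8) (t : ZMod 8) (a : ZMod 8)
      have h8 := congrArg (fun z : ℤ => (z : ZMod 8)) hdiff2
      push_cast at h8
      linear_combination h8
  · -- n odd : mod 8 contradiction
    obtain ⟨b, hb⟩ := hno
    subst hb
    apply zmodkill1 (a : ZMod 8) (b : ZMod 8) (w : ZMod 8)
    have h8 := congrArg (fun z : ℤ => (z : ZMod 8)) heq
    push_cast at h8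
    linear_combination h8

lemma lemB (u n w : ℤ) (hn : n ≠ 0) (hco : IsCoprime u n)
    (heq : w ^ 2 = u ^ 4 - 7 * u ^ 2 * n ^ 2 + 16 * n ^ 4) : u = 0 ∨ u ^ 2 = 4 * n ^ 2 := by
  rcases Int.even_or_odd u with hue | huo
  · -- u even
    obtain ⟨c, hcdef⟩ := hue
    have hu2c : u = 2 * c := by omega
    subst hu2c
    clear hcdef
    have hnodd : Odd n := by
      rcases Int.even_or_odd n with hne | hno
      · exfalso
        obtain ⟨m, hm⟩ := hne
        have h2u : (2:ℤ) ∣ 2*c := ⟨c, rfl⟩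
        have h2n : (2:ℤ) ∣ n := ⟨m, by omega⟩
        have := hco.isUnit_of_dvd' h2u h2n
        rw [Int.isUnit_iff] at this
        omega
      · exact hno
    have hweven : Even w := by
      rcases Int.even_or_odd w with h | h
      · exact h
      · exfalso
        obtain ⟨k, hk⟩ := h
        subst hk
        have h41 : (2*k+1)^2 = 16*c^4 - 28*c^2*n^2 + 16*n^4 := by linear_combination heq
        have h42 : (4:ℤ) ∣ 1 :=
          ⟨4*c^4 - 7*c^2*n^2 + 4*n^4 - k^2 - k, by linear_combination h41⟩
        norm_num at h42
    obtain ⟨sh, hsh⟩ := hweven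
    have hs : (sh) ^ 2 = 4*c^4 - 7*c^2*n^2 + 4*n^4 := by
      have : (sh + sh)^2 = 16*c^4 - 28*c^2*n^2 + 16*n^4 := by
        rw [← hsh]; linear_combination heq
      nlinarith [this]
    have hcocn : IsCoprime c n := IsCoprime.of_isCoprime_of_dvd_left hco ⟨2, by ring⟩
    rcases Int.even_or_odd c with hce | hco2
    · -- c even : c = 2c₁ ; B_odd on (n, c₁) unless c = 0
      by_cases hc0 : c = 0
      · left; rw [hc0]; ring
      obtain ⟨c₁, hc₁⟩ := hce
      have hc2 : c = 2*c₁ := by omega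
      have hc₁0 : c₁ ≠ 0 := by omega
      have hseven : Even sh := by
        rcases Int.even_or_odd sh with h | h
        · exact h
        · exfalso
          obtain ⟨k, hk⟩ := h
          subst hk
          have h41 : (2*k+1)^2 = 64*c₁^4 - 28*c₁^2*n^2 + 4*n^4 := by
            rw [hc2] at hs; linear_combination hs
          have h42 : (4:ℤ) ∣ 1 :=
            ⟨16*c₁^4 - 7*c₁^2*n^2 + n^4 - k^2 - k, by linear_combination h41⟩
          norm_num at h42
      obtain ⟨s₁, hs₁⟩ := hseven
      exfalso
      have hcop2 : IsCoprime n c₁ :=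
        IsCoprime.of_isCoprime_of_dvd_right hcocn.symm ⟨2, by omega⟩
      have heq2 : s₁ ^ 2 = n^4 - 7*n^2*c₁^2 + 16*c₁^4 := by
        have h44 : (s₁ + s₁)^2 = 64*c₁^4 - 28*c₁^2*n^2 + 4*n^4 := by
          rw [← hs₁]; rw [hc2] at hs; linear_combination hs
        have h45 : 4*s₁^2 = 64*c₁^4 - 28*c₁^2*n^2 + 4*n^4 := by linear_combination h44
        linarith
      exact B_odd c₁.natAbs c₁ n s₁ rfl hc₁0 hnodd hcop2 heq2
    · -- c odd
      by_cases hcn : c^2 = n^2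
      · right; nlinarith [hcn]
      exfalso
      -- Pythagorean descent
      have hPT : PythagoreanTriple (2*(c^2 - n^2)) (c*n) sh := by
        have : (2*(c^2-n^2)) * (2*(c^2-n^2)) + (c*n) * (c*n) = sh * sh := by nlinarith [hs]
        exact this
      have hgcd : Int.gcd (2*(c^2 - n^2)) (c*n) = 1 := by
        rw [Int.isCoprime_iff_gcd_eq_one.symm] at *
        apply IsCoprime.mul_left
        · -- IsCoprime 2 (c*n) : c*n odd
          obtain ⟨k, hk⟩ := hco2.mul hnodd
          exact ⟨-k, 1, by rw [hk]; ring⟩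
        · apply IsCoprime.mul_right
          · -- c² - n² coprime c
            have h1 : IsCoprime (n^2) c := (hcocn.symm.pow_left)
            have h2 : IsCoprime (-(n^2) + c*c) c := h1.neg_left.add_mul_right_left c
            have h3 : c^2 - n^2 = -(n^2) + c*c := by ring
            rw [h3]; exact h2
          · have h1 : IsCoprime (c^2) n := (hcocn.pow_left)
            have h2 : IsCoprime (c^2 + n*(-n)) n := h1.add_mul_left_left (-n)
            have h3 : c^2 - n^2 = c^2 + n*(-n) := by ring
            rw [h3]; exact h2
      obtain ⟨m₀, n₀, hmn, hz, hgcdmn, hpar⟩ :=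
        PythagoreanTriple.coprime_classification.mp ⟨hPT, hgcd⟩
      rcases hmn with ⟨hx, hy⟩ | ⟨hx, hy⟩
      · -- x = m₀²-n₀² : parity contradiction since x even, m₀²-n₀² odd
        exfalso
        rcases hpar with ⟨hm2, hn2⟩ | ⟨hm2, hn2⟩
        · obtain ⟨k, hk⟩ : (2:ℤ) ∣ m₀ := by omega
          have hn₀odd : Odd n₀ := by rw [Int.odd_iff]; omega
          obtain ⟨j, hj⟩ := hn₀odd
          rw [hk, hj] at hx
          have : 2*(c^2 - n^2) = 4*k^2 - (4*j^2 + 4*j + 1) := by rw [hx]; ring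
          omega
        · obtain ⟨k, hk⟩ : (2:ℤ) ∣ n₀ := by omega
          have hm₀odd : Odd m₀ := by rw [Int.odd_iff]; omega
          obtain ⟨j, hj⟩ := hm₀odd
          rw [hk, hj] at hx
          have : 2*(c^2 - n^2) = (4*j^2 + 4*j + 1) - 4*k^2 := by rw [hx]; ring
          omega
      · -- main case : c²-n² = m₀ n₀ , c n = m₀² - n₀²
        have hx' : c^2 - n^2 = m₀ * n₀ := by linarith [hx]
        have hQ : (c^2 + n^2) ^ 2 = 4*m₀^4 - 7*m₀^2*n₀^2 + 4*n₀^4 := by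
          linear_combination (c^2 - n^2 + m₀*n₀) * hx' + (4*c*n + 4*(m₀^2 - n₀^2)) * hy
        have hcsq : Odd (c^2 + n^2 ) → False := by
          intro hodd
          obtain ⟨kc, hkc⟩ := hco2
          obtain ⟨kn, hkn⟩ := hnodd
          obtain ⟨m, hm⟩ := hodd
          rw [hkc, hkn] at hm
          have : 2*(2*kc^2 + 2*kc + 2*kn^2 + 2*kn + 1) = 2*m + 1 := by linear_combination hm
          omega
        obtain ⟨κ, hκ⟩ : Even (c^2 + n^2) := by
          rcases Int.even_or_odd (c^2 + n^2) with h | h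
          · exact h
          · exact absurd h (fun hh => hcsq hh)
        -- one of m₀ n₀ even, other odd, both nonzero
        have hmn0 : m₀ * n₀ ≠ 0 := by
          rw [← hx']
          intro hh
          exact hcn (by nlinarith [hh])
        rcases hpar with ⟨hm2, hn2⟩ | ⟨hm2, hn2⟩
        · -- m₀ even
          obtain ⟨ρ, hρ⟩ : (2:ℤ) ∣ m₀ := by omega
          have hωodd : Odd n₀ := by rw [Int.odd_iff]; omega
          have hρ0 : ρ ≠ 0 := by intro hh; rw [hh] at hρ; simp at hρ; exact hmn0 (by rw [hρ]; ring)
          have hgcd2 : IsCoprime n₀ ρ := by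
            have h1 : IsCoprime m₀ n₀ := Int.isCoprime_iff_gcd_eq_one.mpr hgcdmn
            exact (h1.symm).of_isCoprime_of_dvd_right ⟨2, by omega⟩
          have hkeq : κ ^ 2 = n₀^4 - 7*n₀^2*ρ^2 + 16*ρ^4 := by
            have h4 : (κ + κ)^2 = 4*m₀^4 - 7*m₀^2*n₀^2 + 4*n₀^4 := by rw [← hκ]; exact hQ
            rw [hρ] at h4
            have h5 : 4*κ^2 = 64*ρ^4 - 28*ρ^2*n₀^2 + 4*n₀^4 := by linear_combination h4
            linarith
          exact B_odd ρ.natAbs ρ n₀ κ rfl hρ0 hωodd hgcd2 hkeq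
        · -- n₀ even
          obtain ⟨ρ, hρ⟩ : (2:ℤ) ∣ n₀ := by omega
          have hωodd : Odd m₀ := by rw [Int.odd_iff]; omega
          have hρ0 : ρ ≠ 0 := by intro hh; rw [hh] at hρ; simp at hρ; exact hmn0 (by rw [hρ]; ring)
          have hgcd2 : IsCoprime m₀ ρ := by
            have h1 : IsCoprime m₀ n₀ := Int.isCoprime_iff_gcd_eq_one.mpr hgcdmn
            exact h1.of_isCoprime_of_dvd_right ⟨2, by omega⟩
          have hkeq : κ ^ 2 = m₀^4 - 7*m₀^2*ρ^2 + 16*ρ^4 := by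
            have h4 : (κ + κ)^2 = 4*m₀^4 - 7*m₀^2*n₀^2 + 4*n₀^4 := by rw [← hκ]; exact hQ
            rw [hρ] at h4
            have h5 : 4*κ^2 = 4*m₀^4 - 28*m₀^2*ρ^2 + 64*ρ^4 := by linear_combination h4
            linarith
          exact B_odd ρ.natAbs ρ m₀ κ rfl hρ0 hωodd hgcd2 hkeq
  · -- u odd : B_odd directly
    exfalso
    exact B_odd n.natAbs n u w rfl hn huo hco heq

lemma zmodkillA : ∀ u1 n1 v : ZMod 16,
    v^2 ≠ 2*(2*u1+1)^4 - 7*(2*u1+1)^2*(2*n1+1)^2 + 8*(2*n1+1)^4 := by decide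

lemma zmodkillC : ∀ u1 n1 v : ZMod 16,
    v^2 ≠ 2*(2*u1)^4 - 7*(2*u1)^2*(2*n1+1)^2 + 8*(2*n1+1)^4 := by decide

lemma intMain (m n r : ℤ) (hn : n ≠ 0) (hco : IsCoprime m n)
    (heq : r ^ 2 = m * (m ^ 2 - 7 * m * n ^ 2 + 16 * n ^ 4)) :
    m = 0 ∨ m = 4 * n ^ 2 := by
  have hn2 : (1:ℤ) ≤ n ^ 2 := by rcases lt_or_gt_of_ne hn with h | h <;> nlinarith
  have hKpos : 0 < m ^ 2 - 7 * m * n ^ 2 + 16 * n ^ 4 := by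
    nlinarith [sq_nonneg (2*m - 7*n^2), hn2]
  by_cases hr0 : r = 0
  · left
    rw [hr0] at heq
    rcases mul_eq_zero.mp heq.symm with h | h
    · exact h
    · exfalso; linarith
  have hm0 : m ≠ 0 := by
    intro h
    rw [h] at heq
    simp at heq
    exact hr0 (by nlinarith [heq, sq_nonneg r])
  have hmpos : 0 < m := by
    rcases lt_or_gt_of_ne hm0 with h | h
    · exfalso; nlinarith [sq_nonneg r]
    · exact h
  obtain ⟨U, V, hU, hV⟩ := sq_split m (m ^ 2 - 7 * m * n ^ 2 + 16 * n ^ 4) r hmpos hKpos heq.symm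
  set g : ℤ := (Int.gcd m (m ^ 2 - 7 * m * n ^ 2 + 16 * n ^ 4) : ℤ) with hgdef
  have hgdvdm : g ∣ m := Int.gcd_dvd_left _ _
  have hgdvdK : g ∣ m ^ 2 - 7 * m * n ^ 2 + 16 * n ^ 4 := Int.gcd_dvd_right _ _
  have hg16 : g ∣ 16 := by
    have h1 : g ∣ 16 * n ^ 4 := by
      have he : 16 * n ^ 4 = (m ^ 2 - 7 * m * n ^ 2 + 16 * n ^ 4) - m * m + 7 * m * n ^ 2 := by
        ring
      rw [he]
      exact dvd_add (dvd_sub hgdvdK (hgdvdm.mul_left m)) ((hgdvdm.mul_left 7).mul_right (n^2))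
    have h2 : IsCoprime g (n ^ 4) :=
      (IsCoprime.of_isCoprime_of_dvd_left hco hgdvdm).pow_right
    exact h2.dvd_of_dvd_mul_right h1
  have hgpos : 0 < g := by
    have h3 : 0 < Int.gcd m (m ^ 2 - 7 * m * n ^ 2 + 16 * n ^ 4) := by
      rw [Int.gcd_pos_iff]; left; exact hm0
    rw [hgdef]
    exact_mod_cast h3
  have hg16' : g ≤ 16 := Int.le_of_dvd (by norm_num) hg16
  have hg1 : 1 ≤ g := hgpos
  have hgcases : g = 1 ∨ g = 2 ∨ g = 4 ∨ g = 8 ∨ g = 16 := by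
    interval_cases g <;> omega
  -- helper for the square cases
  have hsqcase : ∀ u' v' : ℤ, m = u' ^ 2 →
      (m ^ 2 - 7 * m * n ^ 2 + 16 * n ^ 4) = v' ^ 2 → m = 0 ∨ m = 4 * n ^ 2 := by
    intro u' v' hm hK
    have hcou : IsCoprime u' n :=
      IsCoprime.of_isCoprime_of_dvd_left hco ⟨u', by rw [hm]; ring⟩
    have heqB : v' ^ 2 = u' ^ 4 - 7 * u' ^ 2 * n ^ 2 + 16 * n ^ 4 := by
      rw [← hK, hm]; ring
    rcases lemB u' n v' hn hcou heqB with h | h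
    · left; rw [hm, h]; ring
    · right; rw [hm]; linarith
  -- helper for the 2×square cases
  have h2case : ∀ u' v' : ℤ, m = 2 * u' ^ 2 →
      (m ^ 2 - 7 * m * n ^ 2 + 16 * n ^ 4) = 2 * v' ^ 2 → False := by
    intro u' v' hm hK
    have hnodd : Odd n := by
      rcases Int.even_or_odd n with hne | hno
      · exfalso
        obtain ⟨k, hk⟩ := hne
        have h2m : (2:ℤ) ∣ m := ⟨u'^2, by rw [hm]⟩
        have h2n : (2:ℤ) ∣ n := ⟨k, by omega⟩
        have := hco.isUnit_of_dvd' h2m h2n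
        rw [Int.isUnit_iff] at this
        omega
      · exact hno
    have heqv : v' ^ 2 = 2 * u' ^ 4 - 7 * u' ^ 2 * n ^ 2 + 8 * n ^ 4 := by
      have h4 : 2 * v' ^ 2 = 4 * u' ^ 4 - 14 * u' ^ 2 * n ^ 2 + 16 * n ^ 4 := by
        rw [← hK, hm]; ring
      linarith
    obtain ⟨n₁, hn₁⟩ := hnodd
    rcases Int.even_or_odd u' with hue | huo
    · obtain ⟨u₁, hu₁⟩ := hue
      apply zmodkillC (u₁ : ZMod 16) (n₁ : ZMod 16) (v' : ZMod 16)
      have hu₁' : u' = 2 * u₁ := by omega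
      rw [hu₁', hn₁] at heqv
      have h8 := congrArg (fun z : ℤ => (z : ZMod 16)) heqv
      push_cast at h8
      linear_combination h8
    · obtain ⟨u₁, hu₁⟩ := huo
      apply zmodkillA (u₁ : ZMod 16) (n₁ : ZMod 16) (v' : ZMod 16)
      rw [hu₁, hn₁] at heqv
      have h8 := congrArg (fun z : ℤ => (z : ZMod 16)) heqv
      push_cast at h8
      linear_combination h8
  rcases hgcases with hg | hg | hg | hg | hg <;> rw [hg] at hU hV
  · exact hsqcase U V (by linarith) (by linarith)
  · exact (h2case U V (by linarith) (by linarith)).elim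
  · exact hsqcase (2*U) (2*V) (by rw [hU]; ring) (by rw [hV]; ring)
  · exact (h2case (2*U) (2*V) (by rw [hU]; ring) (by rw [hV]; ring)).elim
  · exact hsqcase (4*U) (4*V) (by rw [hU]; ring) (by rw [hV]; ring)

lemma curveQ (X Y : ℚ) (h : Y ^ 2 = X ^ 3 - 7 * X ^ 2 + 16 * X) : X = 0 ∨ X = 4 := by
  set m : ℤ := X.num with hm
  set q : ℤ := (X.den : ℤ) with hq
  set r : ℤ := Y.num with hr
  set s : ℤ := (Y.den : ℤ) with hs
  have hq0 : (0:ℤ) < q := by rw [hq]; exact_mod_cast X.pos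
  have hs0 : (0:ℤ) < s := by rw [hs]; exact_mod_cast Y.pos
  have hqQ : (q:ℚ) ≠ 0 := by positivity
  have hsQ : (s:ℚ) ≠ 0 := by positivity
  have hXm : (m:ℚ) = X * q := by
    have h1 := Rat.num_div_den X
    rw [hm, hq]
    field_simp at h1 ⊢
    push_cast; linear_combination h1
  have hYr : (r:ℚ) = Y * s := by
    have h1 := Rat.num_div_den Y
    rw [hr, hs]
    field_simp at h1 ⊢
    push_cast; linear_combination h1
  have key : r ^ 2 * q ^ 3 = s ^ 2 * (m ^ 3 - 7 * m ^ 2 * q + 16 * m * q ^ 2) := by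
    have hQ : ((r ^ 2 * q ^ 3 : ℤ) : ℚ) = ((s ^ 2 * (m ^ 3 - 7 * m ^ 2 * q + 16 * m * q ^ 2) : ℤ) : ℚ) := by
      push_cast
      rw [hXm, hYr]
      linear_combination (s:ℚ)^2 * (q:ℚ)^3 * h
    exact_mod_cast hQ
  have hcomq : IsCoprime m q := by
    rw [Int.isCoprime_iff_gcd_eq_one]
    exact X.reduced
  have hcors : IsCoprime r s := by
    rw [Int.isCoprime_iff_gcd_eq_one]
    exact Y.reduced
  have hcoqK : IsCoprime q (m ^ 3 - 7 * m ^ 2 * q + 16 * m * q ^ 2) := by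
    have h1 : IsCoprime q (m ^ 3) := (hcomq.symm).pow_right
    have h2 : IsCoprime q (m ^ 3 + q * (-7 * m ^ 2 + 16 * m * q)) := h1.add_mul_left_right _
    have h3 : m ^ 3 - 7 * m ^ 2 * q + 16 * m * q ^ 2 = m ^ 3 + q * (-7 * m ^ 2 + 16 * m * q) := by
      ring
    rw [h3]; exact h2
  have hq3s2 : q ^ 3 = s ^ 2 := by
    apply Int.dvd_antisymm (by positivity) (by positivity)
    · -- q^3 ∣ s^2
      have h1 : q ^ 3 ∣ s ^ 2 * (m ^ 3 - 7 * m ^ 2 * q + 16 * m * q ^ 2) := ⟨r ^ 2, by linarith [key]⟩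
      exact (hcoqK.pow_left).dvd_of_dvd_mul_right h1
    · -- s^2 ∣ q^3
      have h1 : s ^ 2 ∣ r ^ 2 * q ^ 3 := ⟨m ^ 3 - 7 * m ^ 2 * q + 16 * m * q ^ 2, key⟩
      exact ((hcors.symm).pow).dvd_of_dvd_mul_left h1
  obtain ⟨n, hnpos, hqn, hsn⟩ := den_sq q s hq0 hs0 hq3s2
  have hr2 : r ^ 2 = m * (m ^ 2 - 7 * m * n ^ 2 + 16 * n ^ 4) := by
    have h1 : s ^ 2 * (r ^ 2) = s ^ 2 * (m * (m ^ 2 - 7 * m * n ^ 2 + 16 * n ^ 4)) := by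
      calc s ^ 2 * r ^ 2 = r ^ 2 * q ^ 3 := by rw [hq3s2]; ring
      _ = s ^ 2 * (m ^ 3 - 7 * m ^ 2 * q + 16 * m * q ^ 2) := key
      _ = s ^ 2 * (m * (m ^ 2 - 7 * m * n ^ 2 + 16 * n ^ 4)) := by rw [hqn]; ring
    exact mul_left_cancel₀ (by positivity) h1
  have hcomn : IsCoprime m n := by
    apply IsCoprime.of_isCoprime_of_dvd_right hcomq
    rw [hqn]; exact dvd_pow_self n (by norm_num)
  rcases intMain m n r (by omega) hcomn hr2 with h' | h'
  · left
    rw [← Rat.num_div_den X, ← hm, h']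
    simp
  · right
    have : (m:ℚ) = 4 * (n:ℚ)^2 := by exact_mod_cast h'
    rw [hXm, hqn] at this
    push_cast at this
    have hn0Q : ((n:ℚ))^2 ≠ 0 := by
      have : (n:ℚ) ≠ 0 := by exact_mod_cast (by omega : n ≠ 0)
      positivity
    field_simp at this
    try exact this
    try exact mul_right_cancel₀ hn0Q this

lemma W9_points (x y : ℚ) (h : y ^ 2 + x * y + y = x ^ 3 + x ^ 2) :
    (x = 0 ∧ y = 0) ∨ (x = 0 ∧ y = -1) ∨ (x = -1 ∧ y = 0) := by
  have hq := curveQ (4*x + 4) (8*y + 4*x + 4) (by linear_combination 64 * h)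
  rcases hq with h4 | h4
  · have hx : x = -1 := by linarith
    right; right
    refine ⟨hx, ?_⟩
    rw [hx] at h
    have : y ^ 2 = 0 := by linarith
    exact pow_eq_zero_iff (by norm_num) |>.mp this
  · have hx : x = 0 := by linarith
    rw [hx] at h
    have hy : y * (y + 1) = 0 := by linarith
    rcases mul_eq_zero.mp hy with h' | h'
    · left; exact ⟨hx, h'⟩
    · right; left; exact ⟨hx, by linarith⟩

open WeierstrassCurve.Affine WeierstrassCurve.Affine.Point

lemma W9_ns2 : W9.Nonsingular (-1) 0 := by
  simp only [WeierstrassCurve.Affine.nonsingular_iff, WeierstrassCurve.Affine.equation_iff, W9]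
  norm_num

lemma W9_ns3 : W9.Nonsingular 0 (-1) := by
  simp only [WeierstrassCurve.Affine.nonsingular_iff, WeierstrassCurve.Affine.equation_iff, W9]
  norm_num

lemma some_congr {x₁ y₁ x₂ y₂ : ℚ} (hx : x₁ = x₂) (hy : y₁ = y₂)
    (h₁ : W9.Nonsingular x₁ y₁) (h₂ : W9.Nonsingular x₂ y₂) :
    Point.some _ _ h₁ = Point.some _ _ h₂ := by subst hx; subst hy; rfl

lemma W9_negY00 : W9.negY 0 0 = -1 := by
  simp [WeierstrassCurve.Affine.negY, W9]

lemma W9_double : Point.some _ _ W9_ns + Point.some _ _ W9_ns = Point.some _ _ W9_ns2 := by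
  rw [add_self_of_Y_ne (by rw [W9_negY00]; norm_num)]
  apply some_congr _ _ _ W9_ns2
  · -- addX
    rw [slope_of_Y_ne rfl (by rw [W9_negY00]; norm_num)]
    simp [WeierstrassCurve.Affine.addX, WeierstrassCurve.Affine.negY, W9]
  · rw [slope_of_Y_ne rfl (by rw [W9_negY00]; norm_num)]
    simp [WeierstrassCurve.Affine.addY, WeierstrassCurve.Affine.negAddY,
      WeierstrassCurve.Affine.addX, WeierstrassCurve.Affine.negY, W9]

lemma W9_2tor : Point.some _ _ W9_ns2 + Point.some _ _ W9_ns2 = 0 := by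
  apply add_self_of_Y_eq
  simp [WeierstrassCurve.Affine.negY, W9]

lemma W9_negP : -Point.some _ _ W9_ns = Point.some _ _ W9_ns3 := by
  rw [neg_some]
  apply some_congr rfl _ _ W9_ns3
  simp [WeierstrassCurve.Affine.negY, W9]

/-- The elliptic curve `y² + xy + y = x³ + x²` over `ℚ` has Mordell–Weil group
cyclic of order 4, generated by the point `(0, 0)`. -/
theorem mordell_weil_W9 :
    addOrderOf (WeierstrassCurve.Affine.Point.some _ _ W9_ns) = 4 ∧
      ∀ Q : W9.Point, ∃ k : ℤ, Q = k • WeierstrassCurve.Affine.Point.some _ _ W9_ns := by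
  have h2P : (2:ℕ) • Point.some _ _ W9_ns = Point.some _ _ W9_ns2 := by
    rw [two_nsmul]; exact W9_double
  have h4P : (2^2:ℕ) • Point.some _ _ W9_ns = 0 := by
    rw [show (2^2:ℕ) = 2*2 by norm_num, mul_smul, h2P, two_nsmul]
    exact W9_2tor
  constructor
  · have h1 : ¬ (2^1:ℕ) • Point.some _ _ W9_ns = 0 := by
      rw [pow_one, h2P]
      exact some_ne_zero W9_ns2
    have := addOrderOf_eq_prime_pow (p := 2) (n := 1) h1 h4P
    simpa using this
  · intro Q
    cases Q with
    | zero =>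
      exact ⟨0, by rw [zero_zsmul]; rfl⟩
    | @some x y h =>
      have heq : y ^ 2 + x * y + y = x ^ 3 + x ^ 2 := by
        have h1 := ((W9.nonsingular_iff x y).mp h).1
        rw [WeierstrassCurve.Affine.equation_iff] at h1
        simp only [W9] at h1
        linarith [h1]
      rcases W9_points x y heq with ⟨hx, hy⟩ | ⟨hx, hy⟩ | ⟨hx, hy⟩
      · exact ⟨1, by rw [one_zsmul]; exact some_congr hx hy h W9_ns⟩
      · refine ⟨-1, ?_⟩
        rw [neg_one_zsmul, W9_negP]
        exact some_congr hx hy h W9_ns3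
      · refine ⟨2, ?_⟩
        rw [two_zsmul, W9_double]
        exact some_congr hx hy h W9_ns2
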